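/- Every nonzero fractional O'-ideal a of K (i.e. an O'-submodule of K with d·a ⊆ O' for some d ∈ K*) that is not finitely generated as an O'-module is equal to ℘ₙ = tⁿ·O_K for a uniquely determined integer n ∈ ℤ. -/

import Mathlib

set_option synthInstance.maxHeartbeats 1000000
set_option maxHeartbeats 1000000

noncomputable section

open HahnSeries

namespace TwoDimLocal

variable (k : Type) [Field k]

/-- `k((u))`, the field of Laurent series over `k`. -/
abbrev K1 := LaurentSeries k

/-- `K = k((u))((t))`, the two-dimensional local field of iterated Laurent series. -/
abbrev K := LaurentSeries (LaurentSeries k)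

section Nonneg

variable (F : Type) [Field F]

lemma order_nonneg_of_support {x : LaurentSeries F} (hx : x ≠ 0)
    (h : ∀ n : ℤ, n < 0 → x.coeff n = 0) : 0 ≤ x.order := by
  by_contra hlt
  push_neg at hlt
  exact coeff_order_eq_zero.not.2 hx (h x.order hlt)

/-- The subring `F[[X]] ⊆ F((X))` of power series, described by vanishing of the
coefficients of negative index. -/
def nonneg : Subring (LaurentSeries F) where
  carrier := {x | ∀ n : ℤ, n < 0 → x.coeff n = 0}
  zero_mem' := by intro n _; simp
  one_mem' := by
    intro n hn
    rw [HahnSeries.coeff_one, if_neg (by omega)]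
  add_mem' := by
    intro a b ha hb n hn
    rw [HahnSeries.coeff_add, ha n hn, hb n hn, add_zero]
  neg_mem' := by
    intro a ha n hn
    rw [HahnSeries.coeff_neg, ha n hn, neg_zero]
  mul_mem' := by
    intro a b ha hb n hn
    by_contra hne
    obtain ⟨i, hi, j, hj, rfl⟩ := support_mul_subset ((mem_support _ _).2 hne)
    rw [mem_support] at hi hj
    have hi0 : 0 ≤ i := by by_contra h; push_neg at h; exact hi (ha i h)
    have hj0 : 0 ≤ j := by by_contra h; push_neg at h; exact hj (hb j h)
    exact absurd hn (not_lt.2 (add_nonneg hi0 hj0))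

lemma mem_nonneg_iff {x : LaurentSeries F} :
    x ∈ nonneg F ↔ ∀ n : ℤ, n < 0 → x.coeff n = 0 := Iff.rfl

lemma coeff_zero_mul {x y : LaurentSeries F} (hx : x ∈ nonneg F) (hy : y ∈ nonneg F) :
    (x * y).coeff 0 = x.coeff 0 * y.coeff 0 := by
  rcases eq_or_ne x 0 with rfl | hx0
  · simp
  rcases eq_or_ne y 0 with rfl | hy0
  · simp
  have hxo : 0 ≤ x.order := order_nonneg_of_support F hx0 hx
  have hyo : 0 ≤ y.order := order_nonneg_of_support F hy0 hy
  rcases lt_or_eq_of_le hxo with hxo' | hxo'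
  · have h1 : x.coeff 0 = 0 := HahnSeries.coeff_eq_zero_of_lt_order hxo'
    have h2 : (x * y).coeff 0 = 0 := by
      apply HahnSeries.coeff_eq_zero_of_lt_order
      rw [HahnSeries.order_mul hx0 hy0]
      omega
    rw [h1, h2, zero_mul]
  rcases lt_or_eq_of_le hyo with hyo' | hyo'
  · have h1 : y.coeff 0 = 0 := HahnSeries.coeff_eq_zero_of_lt_order hyo'
    have h2 : (x * y).coeff 0 = 0 := by
      apply HahnSeries.coeff_eq_zero_of_lt_order
      rw [HahnSeries.order_mul hx0 hy0]
      omega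
    rw [h1, h2, mul_zero]
  have := HahnSeries.coeff_mul_order_add_order x y
  rw [HahnSeries.leadingCoeff_eq, HahnSeries.leadingCoeff_eq, ← hxo', ← hyo'] at this
  simpa using this

end Nonneg

/-- The ring of integers `O_K = k((u))[[t]]` of `K` with respect to the `t`-adic valuation. -/
def OK : Subring (K k) := nonneg (K1 k)

/-- The rank-2 valuation subring `O' = p⁻¹(k[[u]]) ⊆ K`, consisting of those `t`-adic
integers whose constant `t`-coefficient is a power series in `u`. -/
def Oprime : Subring (K k) where
  carrier := {x | x ∈ OK k ∧ x.coeff 0 ∈ nonneg k}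
  zero_mem' := ⟨Subring.zero_mem _, by simp⟩
  one_mem' := ⟨Subring.one_mem _, by
    intro n hn
    rw [show ((1 : K k).coeff 0) = 1 from by rw [HahnSeries.coeff_one]; simp]
    rw [HahnSeries.coeff_one, if_neg (by omega)]⟩
  add_mem' := by
    rintro a b ⟨ha1, ha2⟩ ⟨hb1, hb2⟩
    refine ⟨Subring.add_mem _ ha1 hb1, ?_⟩
    rw [HahnSeries.coeff_add]
    exact Subring.add_mem _ ha2 hb2
  neg_mem' := by
    rintro a ⟨ha1, ha2⟩
    refine ⟨Subring.neg_mem _ ha1, ?_⟩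
    rw [HahnSeries.coeff_neg]
    exact Subring.neg_mem _ ha2
  mul_mem' := by
    rintro a b ⟨ha1, ha2⟩ ⟨hb1, hb2⟩
    refine ⟨Subring.mul_mem _ ha1 hb1, ?_⟩
    rw [coeff_zero_mul (K1 k) ha1 hb1]
    exact Subring.mul_mem _ ha2 hb2

lemma Oprime_le_OK : (Oprime k : Set (K k)) ⊆ (OK k : Set (K k)) := fun _ h => h.1

/-- The local parameter `t` of `K = k((u))((t))`. -/
def t : K k := HahnSeries.single (1 : ℤ) 1

/-- The local parameter `u` of `K = k((u))((t))`, i.e. the image in `K` of the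
local parameter of `k((u))`. -/
def u : K k := HahnSeries.C (HahnSeries.single (1 : ℤ) (1 : k))

/-- The maximal ideal `m = p⁻¹(u·k[[u]])` of `O'`, as a subset of `K`. -/
def mSet : Set (K k) := {x | x ∈ Oprime k ∧ (x.coeff 0).coeff 0 = 0}

/-- The rank-two valuation `ν' : K* → ℤ ×ₗ ℤ`: the first component is the `t`-adic order,
the second one the `u`-adic order of the leading `t`-coefficient. (Junk value at `0`.) -/
def nu (x : K k) : ℤ ×ₗ ℤ := toLex (x.order, (x.coeff x.order).order)

end TwoDimLocal

namespace TwoDimLocal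

/-- `℘ₙ = tⁿ·O_K`, the `O'`-submodule of `K` generated by the elements `uⁱtⁿ`, `i ∈ ℤ`. -/
def wp (k : Type) [Field k] (n : ℤ) : Submodule (Oprime k) (K k) :=
  Submodule.span (Oprime k) {x | ∃ i : ℤ, x = u k ^ i * t k ^ n}

section Helpers

variable {k : Type} [Field k]

lemma mem_nonneg_iff_order {F : Type} [Field F] {y : LaurentSeries F} :
    y ∈ nonneg F ↔ y = 0 ∨ 0 ≤ y.order := by
  constructor
  · intro h
    rcases eq_or_ne y 0 with rfl | hy
    · exact Or.inl rfl
    · exact Or.inr (order_nonneg_of_support F hy h)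
  · rintro (rfl | h)
    · exact (nonneg F).zero_mem
    · intro n hn
      exact HahnSeries.coeff_eq_zero_of_lt_order (hn.trans_le h)

lemma mem_Oprime_iff_ne {x : K k} (hx : x ≠ 0) :
    x ∈ Oprime k ↔ 0 < x.order ∨ (x.order = 0 ∧ 0 ≤ (x.coeff x.order).order) := by
  have hmem : x ∈ Oprime k ↔ x ∈ OK k ∧ x.coeff 0 ∈ nonneg k := Iff.rfl
  rw [hmem]
  constructor
  · rintro ⟨h1, h2⟩
    have h0 : 0 ≤ x.order := order_nonneg_of_support _ hx h1
    rcases h0.lt_or_eq with h | h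
    · exact Or.inl h
    · refine Or.inr ⟨h.symm, ?_⟩
      have h2' : x.coeff x.order ∈ nonneg k := by rw [← h]; exact h2
      rcases mem_nonneg_iff_order.mp h2' with hz | hord
      · exact absurd hz (coeff_order_eq_zero.not.2 hx)
      · exact hord
  · rintro (h | ⟨h, h2⟩)
    · refine ⟨fun n hn => HahnSeries.coeff_eq_zero_of_lt_order (hn.trans h), ?_⟩
      rw [HahnSeries.coeff_eq_zero_of_lt_order h]
      exact (nonneg k).zero_mem
    · refine ⟨fun n hn => HahnSeries.coeff_eq_zero_of_lt_order (by omega), ?_⟩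
      have hc : x.coeff 0 = x.coeff x.order := by rw [h]
      rw [hc]
      exact mem_nonneg_iff_order.mpr (Or.inr h2)

lemma order_mul' {x y : K k} (hx : x ≠ 0) (hy : y ≠ 0) :
    (x * y).order = x.order + y.order := HahnSeries.order_mul hx hy

lemma ord2_mul {x y : K k} (hx : x ≠ 0) (hy : y ≠ 0) :
    ((x * y).coeff (x * y).order).order
      = (x.coeff x.order).order + (y.coeff y.order).order := by
  have h1 := HahnSeries.coeff_mul_order_add_order x y
  rw [HahnSeries.leadingCoeff_eq, HahnSeries.leadingCoeff_eq] at h1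
  rw [HahnSeries.order_mul hx hy, h1]
  exact HahnSeries.order_mul (coeff_order_eq_zero.not.2 hx) (coeff_order_eq_zero.not.2 hy)

lemma sat (a : Submodule (Oprime k) (K k)) {x y : K k} (hxa : x ∈ a) (hx : x ≠ 0)
    (hy : y ≠ 0)
    (h : x.order < y.order ∨
      (x.order = y.order ∧ (x.coeff x.order).order ≤ (y.coeff y.order).order)) :
    y ∈ a := by
  set c := y * x⁻¹ with hcdef
  have hcx : c * x = y := inv_mul_cancel_right₀ hx y
  have hc0 : c ≠ 0 := fun h0 => hy (by rw [← hcx, h0]; exact zero_mul x)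
  have ho1 : y.order = c.order + x.order := by rw [← hcx]; exact order_mul' hc0 hx
  have ho2 : (y.coeff y.order).order
      = (c.coeff c.order).order + (x.coeff x.order).order := by
    rw [← hcx]; exact ord2_mul hc0 hx
  have hcO : c ∈ Oprime k := by
    rw [mem_Oprime_iff_ne hc0]
    rcases h with h | ⟨h1, h2⟩
    · left; omega
    · exact Or.inr ⟨by omega, by omega⟩
  have hmem := a.smul_mem (⟨c, hcO⟩ : Oprime k) hxa
  rwa [show (⟨c, hcO⟩ : Oprime k) • x = y from by rw [← hcx]; rfl] at hmem

lemma gen_eq (i n : ℤ) :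
    u k ^ i * t k ^ n = HahnSeries.single n (HahnSeries.single i (1 : k)) := by
  have hC : ∀ (a : K1 k) (m : ℤ), (HahnSeries.C : K1 k →+* K k) (a ^ m)
      = (HahnSeries.C : K1 k →+* K k) a ^ m :=
    fun a m => map_zpow₀ (HahnSeries.C : K1 k →+* K k) a m
  rw [u, t, ← hC, ← RatFunc.single_zpow (F := k), ← RatFunc.single_zpow (F := K1 k),
    HahnSeries.C_apply, HahnSeries.single_mul_single, zero_add, mul_one]

lemma gen_ne (i n : ℤ) : u k ^ i * t k ^ n ≠ (0 : K k) := by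
  rw [gen_eq]
  exact HahnSeries.single_ne_zero (HahnSeries.single_ne_zero one_ne_zero)

lemma gen_order (i n : ℤ) : (u k ^ i * t k ^ n).order = n := by
  rw [gen_eq]
  exact HahnSeries.order_single (HahnSeries.single_ne_zero one_ne_zero)

lemma gen_coeff (i n : ℤ) :
    (u k ^ i * t k ^ n).coeff n = HahnSeries.single i (1 : k) := by
  rw [gen_eq]
  exact HahnSeries.coeff_single_same _ _

/-- The submodule `{x | x = 0 ∨ n ≤ x.order}`, which will be shown to equal `wp k n`. -/
def wpAux (k : Type) [Field k] (n : ℤ) : Submodule (Oprime k) (K k) where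
  carrier := {x | x = 0 ∨ n ≤ x.order}
  zero_mem' := Or.inl rfl
  add_mem' := by
    rintro x y hx hy
    rcases hx with rfl | hx
    · simpa using hy
    rcases hy with rfl | hy
    · rw [add_zero]; exact Or.inr hx
    rcases eq_or_ne (x + y) 0 with h | h
    · exact Or.inl h
    right
    by_contra hlt
    push_neg at hlt
    apply coeff_order_eq_zero.not.2 h
    rw [HahnSeries.coeff_add,
      HahnSeries.coeff_eq_zero_of_lt_order (lt_of_lt_of_le hlt hx),
      HahnSeries.coeff_eq_zero_of_lt_order (lt_of_lt_of_le hlt hy), add_zero]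
  smul_mem' := by
    rintro ⟨c, hc⟩ x hx
    show c * x = 0 ∨ n ≤ (c * x).order
    rcases eq_or_ne x 0 with rfl | hx0
    · left; exact mul_zero c
    rcases eq_or_ne c 0 with rfl | hc0
    · left; exact zero_mul x
    rcases hx with rfl | hx
    · exact absurd rfl hx0
    right
    have hc' : c ∈ OK k ∧ c.coeff 0 ∈ nonneg k := hc
    have hcord : 0 ≤ c.order := order_nonneg_of_support _ hc0 hc'.1
    rw [order_mul' hc0 hx0]; omega

lemma wp_eq (n : ℤ) : wp k n = wpAux k n := by
  apply le_antisymm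
  · rw [wp, Submodule.span_le]
    rintro x ⟨i, rfl⟩
    exact Or.inr (le_of_eq (gen_order i n).symm)
  · intro x hx
    rcases eq_or_ne x 0 with rfl | hx0
    · exact (wp k n).zero_mem
    rcases (hx : x = 0 ∨ n ≤ x.order) with rfl | hx
    · exact (wp k n).zero_mem
    set j := (x.coeff x.order).order with hj
    have hg : u k ^ j * t k ^ n ∈ wp k n := Submodule.subset_span ⟨j, rfl⟩
    rcases lt_or_eq_of_le hx with h | h
    · exact sat _ hg (gen_ne j n) hx0 (Or.inl (by rw [gen_order]; exact h))
    · refine sat _ hg (gen_ne j n) hx0 (Or.inr ⟨by rw [gen_order]; exact h, ?_⟩)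
      rw [gen_order, gen_coeff, HahnSeries.order_single one_ne_zero]

end Helpers

/-- Every nonzero fractional `O'`-ideal of `K` which is not finitely
generated as an `O'`-module equals `℘ₙ = tⁿ·O_K` for a uniquely determined `n ∈ ℤ`. -/
theorem non_fg_fractional_ideal_eq_wp (k : Type) [Field k]
    (a : Submodule (Oprime k) (K k)) (ha : a ≠ ⊥)
    (hfrac : ∃ d : K k, d ≠ 0 ∧ ∀ x ∈ a, d * x ∈ Oprime k)
    (hnfg : ¬ a.FG) :
    ∃! n : ℤ, a = wp k n := by
  obtain ⟨d, hd0, hd⟩ := hfrac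
  obtain ⟨x1, hx1a, hx10⟩ := (Submodule.ne_bot_iff a).mp ha
  have hbd : ∀ x ∈ a, x ≠ 0 → -d.order ≤ x.order := by
    intro x hxa hx0
    have hdx : d * x ∈ Oprime k := hd x hxa
    have hdx0 : d * x ≠ 0 := mul_ne_zero hd0 hx0
    have hdx' : d * x ∈ OK k ∧ (d * x).coeff 0 ∈ nonneg k := hdx
    have h0 : 0 ≤ (d * x).order := order_nonneg_of_support _ hdx0 hdx'.1
    rw [order_mul' hd0 hx0] at h0
    omega
  set P : ℤ → Prop := fun m => ∃ x, x ∈ a ∧ x ≠ 0 ∧ x.order = m with hP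
  obtain ⟨n, ⟨xn, hxna, hxn0, hxnord⟩, hnmin⟩ :=
    Int.exists_least_of_bdd (P := P)
      ⟨-d.order, fun z ⟨x, hxa, hx0, hxo⟩ => hxo ▸ hbd x hxa hx0⟩
      ⟨x1.order, x1, hx1a, hx10, rfl⟩
  set Q : ℤ → Prop :=
    fun j => ∃ x, x ∈ a ∧ x ≠ 0 ∧ x.order = n ∧ (x.coeff x.order).order = j with hQ
  by_cases hbdd : ∃ b : ℤ, ∀ j, Q j → b ≤ j
  · exfalso
    obtain ⟨i0, ⟨x0, hx0a, hx00, hx0ord, hx0c⟩, hi0min⟩ :=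
      Int.exists_least_of_bdd hbdd ⟨_, xn, hxna, hxn0, hxnord, rfl⟩
    apply hnfg
    refine ⟨{x0}, ?_⟩
    rw [Finset.coe_singleton]
    apply le_antisymm
    · exact Submodule.span_le.mpr (Set.singleton_subset_iff.mpr hx0a)
    · intro y hy
      rcases eq_or_ne y 0 with rfl | hy0
      · exact Submodule.zero_mem _
      have hyo : n ≤ y.order := hnmin y.order ⟨y, hy, hy0, rfl⟩
      have hmem : x0 ∈ Submodule.span (Oprime k) ({x0} : Set (K k)) :=
        Submodule.subset_span rfl
      apply sat _ hmem hx00 hy0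
      rcases lt_or_eq_of_le hyo with h | h
      · left; omega
      · right
        refine ⟨by omega, ?_⟩
        have hQy : Q ((y.coeff y.order).order) := ⟨y, hy, hy0, h.symm, rfl⟩
        have hle := hi0min _ hQy
        omega
  · push_neg at hbdd
    have hEq : a = wp k n := by
      rw [wp_eq]
      apply le_antisymm
      · intro y hy
        rcases eq_or_ne y 0 with rfl | hy0
        · exact Or.inl rfl
        · exact Or.inr (hnmin y.order ⟨y, hy, hy0, rfl⟩)
      · intro y hy
        rcases eq_or_ne y 0 with rfl | hy0
        · exact Submodule.zero_mem _
        rcases (hy : y = 0 ∨ n ≤ y.order) with rfl | hyo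
        · exact Submodule.zero_mem _
        obtain ⟨j, ⟨x, hxa, hx0, hxordn, hxc⟩, hjlt⟩ := hbdd ((y.coeff y.order).order)
        apply sat a hxa hx0 hy0
        rcases lt_or_eq_of_le hyo with h | h
        · left; omega
        · right; exact ⟨by omega, by omega⟩
    refine ⟨n, hEq, ?_⟩
    intro m hm
    have hw : wp k m = wp k n := hm.symm.trans hEq
    have h1 : (u k ^ (0 : ℤ) * t k ^ m) ∈ wp k n := by
      rw [← hw]; exact Submodule.subset_span ⟨0, rfl⟩
    have h2 : (u k ^ (0 : ℤ) * t k ^ n) ∈ wp k m := by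
      rw [hw]; exact Submodule.subset_span ⟨0, rfl⟩
    rw [wp_eq] at h1 h2
    have h1' : u k ^ (0 : ℤ) * t k ^ m = 0 ∨ n ≤ (u k ^ (0 : ℤ) * t k ^ m).order := h1
    have h2' : u k ^ (0 : ℤ) * t k ^ n = 0 ∨ m ≤ (u k ^ (0 : ℤ) * t k ^ n).order := h2
    rcases h1' with h | h
    · exact absurd h (gen_ne 0 m)
    rcases h2' with h' | h'
    · exact absurd h' (gen_ne 0 n)
    rw [gen_order] at h h'
    omega

end TwoDimLocal
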